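/- Let γ: ℕ → [0,1) satisfy γ(n) = o(1/log n) and sup_n γ(n) =: β/(2−β) with β := sup_{k≥1} 2γ(k)/(1+γ(k)) < 1. Fix C > 0 and for each n ≥ 2 define f*_n(x) = exp( 2 log(n) γ(⌈xn⌉) / (1 + γ(⌈xn⌉)) ) for x > 0. Then for any fixed k ≥ 1, ∫_0^{1/k} f*_n(x) dx → 1/k as n → ∞. -/

import Mathlib

open Filter Asymptotics MeasureTheory

theorem stmt_18 (γ : ℕ → ℝ) (hγrange : ∀ n, γ n ∈ Set.Ico (0 : ℝ) 1)
    (hγ : (fun n : ℕ => γ n) =o[atTop] fun n : ℕ => 1 / Real.log n)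
    (hβ : (⨆ k : ℕ, 2 * γ (k + 1) / (1 + γ (k + 1))) < 1) :
    ∀ k : ℕ, 1 ≤ k →
      Tendsto (fun n : ℕ =>
          ∫ x in Set.Ioc (0 : ℝ) (1 / (k : ℝ)),
            Real.exp (2 * Real.log n * γ ⌈x * n⌉₊ / (1 + γ ⌈x * n⌉₊)))
        atTop (nhds (1 / (k : ℝ))) := by
  intro k hk
  have hγ0 : ∀ m, 0 ≤ γ m := fun m => (hγrange m).1
  have hγ1 : ∀ m, γ m < 1 := fun m => (hγrange m).2
  have hden : ∀ m, (1:ℝ) ≤ 1 + γ m := fun m => by linarith [hγ0 m]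
  have hdenpos : ∀ m, (0:ℝ) < 1 + γ m := fun m => by linarith [hγ0 m]
  set β := ⨆ k : ℕ, 2 * γ (k + 1) / (1 + γ (k + 1)) with hβdef
  have hbdd : BddAbove (Set.range fun k : ℕ => 2 * γ (k + 1) / (1 + γ (k + 1))) := by
    refine ⟨1, ?_⟩
    rintro _ ⟨m, rfl⟩
    rw [div_le_one (hdenpos _)]
    linarith [hγ1 (m + 1)]
  have hβnonneg : 0 ≤ β := by
    refine le_trans ?_ (le_ciSup hbdd 0)
    have := hγ0 1
    positivity
  have hβle : ∀ m, 1 ≤ m → 2 * γ m / (1 + γ m) ≤ β := by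
    intro m hm
    obtain ⟨j, rfl⟩ := Nat.exists_eq_add_of_le' hm
    exact le_ciSup hbdd j
  -- uniform bound D on γ m * log m
  obtain ⟨N, hN⟩ := eventually_atTop.mp (hγ.def one_pos)
  set M := max N 2 with hMdef
  set D := max 1 (Real.log M) with hDdef
  have hD0 : (0:ℝ) ≤ D := le_trans zero_le_one (le_max_left _ _)
  have hD : ∀ m : ℕ, γ m * Real.log m ≤ D := by
    intro m
    rcases le_or_gt M m with h | h
    · have hm2 : 2 ≤ m := le_trans (le_max_right _ _) h
      have hm1 : (1:ℝ) < (m:ℝ) := by exact_mod_cast hm2.trans_lt' one_lt_two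
      have hlogpos : 0 < Real.log m := Real.log_pos hm1
      have hnm := hN m (le_trans (le_max_left _ _) h)
      rw [Real.norm_eq_abs, Real.norm_eq_abs, abs_of_nonneg (hγ0 m), one_mul,
        abs_of_nonneg (by positivity)] at hnm
      have h1 : γ m * Real.log m ≤ (1 / Real.log m) * Real.log m :=
        mul_le_mul_of_nonneg_right hnm hlogpos.le
      rw [one_div_mul_cancel hlogpos.ne'] at h1
      exact h1.trans (le_max_left _ _)
    · have hlog_nonneg : 0 ≤ Real.log m := Real.log_natCast_nonneg m
      have h2 : γ m * Real.log m ≤ Real.log m := by nlinarith [hγ0 m, hγ1 m]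
      have h3 : Real.log m ≤ Real.log M := by
        rcases Nat.eq_zero_or_pos m with rfl | hm
        · simpa using Real.log_natCast_nonneg M
        · exact Real.log_le_log (by exact_mod_cast hm) (by exact_mod_cast h.le)
      exact h2.trans (h3.trans (le_max_right _ _))
  -- γ m * log m → 0
  have hγlog : Tendsto (fun m : ℕ => γ m * Real.log m) atTop (nhds 0) := by
    refine hγ.tendsto_div_nhds_zero.congr' ?_
    filter_upwards [eventually_ge_atTop 2] with m hm
    have hlogpos : 0 < Real.log m :=
      Real.log_pos (by exact_mod_cast hm.trans_lt' one_lt_two)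
    field_simp
  have hloginv : Tendsto (fun m : ℕ => 1 / Real.log m) atTop (nhds 0) := by
    simp only [one_div]
    exact (Real.tendsto_log_atTop.comp tendsto_natCast_atTop_atTop).inv_tendsto_atTop
  have hγ00 : Tendsto γ atTop (nhds 0) := hγ.isBigO.trans_tendsto hloginv
  -- pointwise convergence of the exponent
  have hpt : ∀ x : ℝ, 0 < x →
      Tendsto (fun n : ℕ => 2 * Real.log n * γ ⌈x * n⌉₊ / (1 + γ ⌈x * n⌉₊))
        atTop (nhds 0) := by
    intro x hx
    have hmtop : Tendsto (fun n : ℕ => ⌈x * n⌉₊) atTop atTop := by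
      rw [tendsto_atTop]
      intro b
      have hxn : Tendsto (fun n : ℕ => x * n) atTop atTop :=
        (tendsto_natCast_atTop_atTop (R := ℝ)).const_mul_atTop hx
      filter_upwards [hxn.eventually_ge_atTop (b : ℝ)] with n hn
      exact_mod_cast hn.trans (Nat.le_ceil _)
    have hA : Tendsto (fun n : ℕ => γ ⌈x * n⌉₊ * Real.log ⌈x * n⌉₊) atTop (nhds 0) :=
      hγlog.comp hmtop
    have hB : Tendsto (fun n : ℕ => γ ⌈x * n⌉₊) atTop (nhds 0) := hγ00.comp hmtop
    have hbound : Tendsto (fun n : ℕ =>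
        2 * (γ ⌈x * n⌉₊ * Real.log ⌈x * n⌉₊ + γ ⌈x * n⌉₊ * (-Real.log x)))
        atTop (nhds 0) := by
      have := (hA.add (hB.mul_const (-Real.log x))).const_mul 2
      simpa using this
    refine squeeze_zero' ?_ ?_ hbound
    · filter_upwards with n
      exact div_nonneg
        (mul_nonneg (mul_nonneg two_pos.le (Real.log_natCast_nonneg n)) (hγ0 _))
        (hdenpos _).le
    · filter_upwards [eventually_ge_atTop 1] with n hn
      set m := ⌈x * n⌉₊ with hm
      have hn0 : (0:ℝ) < (n:ℝ) := by exact_mod_cast hn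
      have hxn0 : (0:ℝ) < x * n := by positivity
      have hceil : x * n ≤ (m:ℝ) := Nat.le_ceil _
      have hlog : Real.log n ≤ Real.log m - Real.log x := by
        have h1 : Real.log (x * n) ≤ Real.log m := Real.log_le_log hxn0 hceil
        rw [Real.log_mul hx.ne' hn0.ne'] at h1
        linarith
      have hlogn : 0 ≤ Real.log n := Real.log_natCast_nonneg n
      have h2 : 2 * Real.log n * γ m / (1 + γ m) ≤ 2 * Real.log n * γ m :=
        div_le_self (mul_nonneg (mul_nonneg two_pos.le hlogn) (hγ0 m)) (hden m)
      refine h2.trans ?_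
      nlinarith [mul_nonneg (sub_nonneg.mpr hlog) (hγ0 m), hγ0 m]
  -- setup for dominated convergence
  have hkpos : (0:ℝ) < (k:ℝ) := by exact_mod_cast hk
  set b := 1 / (k:ℝ) with hbdef
  have hb0 : 0 < b := by positivity
  have hb1 : b ≤ 1 := by
    rw [hbdef, div_le_one hkpos]
    exact_mod_cast hk
  -- measurability
  have hmeas : ∀ n : ℕ, AEStronglyMeasurable
      (fun x : ℝ => Real.exp (2 * Real.log n * γ ⌈x * n⌉₊ / (1 + γ ⌈x * n⌉₊)))
      (volume.restrict (Set.Ioc 0 b)) := by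
    intro n
    have h1 : Measurable fun x : ℝ => γ ⌈x * n⌉₊ :=
      measurable_from_top.comp (Nat.measurable_ceil.comp (measurable_id.mul_const _))
    exact (((measurable_const.mul h1).div (measurable_const.add h1)).exp).aestronglyMeasurable
  -- bound
  have h_bd : ∀ n : ℕ, ∀ x ∈ Set.Ioc (0:ℝ) b,
      Real.exp (2 * Real.log n * γ ⌈x * n⌉₊ / (1 + γ ⌈x * n⌉₊)) ≤
        Real.exp (2 * D) * x ^ (-β) := by
    intro n x hx
    obtain ⟨hx0, hxb⟩ := hx
    have hxr : x ^ (-β) = Real.exp (-β * Real.log x) := by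
      rw [Real.rpow_def_of_pos hx0]; ring_nf
    rw [hxr, ← Real.exp_add, Real.exp_le_exp]
    set m := ⌈x * n⌉₊ with hm
    have hγm := hγ0 m
    have hlx : Real.log x ≤ 0 := Real.log_nonpos hx0.le (hxb.trans hb1)
    rcases Nat.eq_zero_or_pos n with rfl | hn
    · have hz : 2 * Real.log ((0:ℕ):ℝ) * γ m / (1 + γ m) = 0 := by
        norm_num
      rw [hz]
      nlinarith [mul_nonneg hβnonneg (neg_nonneg.mpr hlx)]
    · have hn0 : (0:ℝ) < (n:ℝ) := by exact_mod_cast hn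
      have hxn0 : (0:ℝ) < x * n := by positivity
      have hm1 : 1 ≤ m := Nat.ceil_pos.mpr hxn0
      have hceil : x * n ≤ (m:ℝ) := Nat.le_ceil _
      have hlog : Real.log n ≤ Real.log m - Real.log x := by
        have h1 : Real.log (x * n) ≤ Real.log m := Real.log_le_log hxn0 hceil
        rw [Real.log_mul hx0.ne' hn0.ne'] at h1
        linarith
      have hc : 2 * γ m / (1 + γ m) ≤ β := hβle m hm1
      have hc0 : 0 ≤ 2 * γ m / (1 + γ m) := div_nonneg (by linarith) (hdenpos m).le
      have hc2 : 2 * γ m / (1 + γ m) ≤ 2 * γ m :=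
        div_le_self (by linarith) (hden m)
      have hDm : γ m * Real.log m ≤ D := hD m
      have hlogm : 0 ≤ Real.log m := Real.log_natCast_nonneg m
      have hlogn : 0 ≤ Real.log n := Real.log_natCast_nonneg n
      have heq : 2 * Real.log n * γ m / (1 + γ m) =
          (2 * γ m / (1 + γ m)) * Real.log n := by ring
      rw [heq]
      calc (2 * γ m / (1 + γ m)) * Real.log n
          ≤ (2 * γ m / (1 + γ m)) * (Real.log m - Real.log x) :=
            mul_le_mul_of_nonneg_left hlog hc0
        _ = (2 * γ m / (1 + γ m)) * Real.log m
              + (2 * γ m / (1 + γ m)) * (-Real.log x) := by ring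
        _ ≤ (2 * γ m) * Real.log m + β * (-Real.log x) := by
            gcongr ?_ + ?_ <;> gcongr <;> linarith
        _ ≤ 2 * D + -β * Real.log x := by nlinarith [hDm]
  -- integrability of the bound
  have hgint : Integrable (fun x : ℝ => Real.exp (2 * D) * x ^ (-β))
      (volume.restrict (Set.Ioc 0 b)) := by
    apply Integrable.const_mul
    have h1 : IntervalIntegrable (fun x : ℝ => x ^ (-β)) volume 0 b :=
      intervalIntegral.intervalIntegrable_rpow' (by linarith)
    rwa [intervalIntegrable_iff_integrableOn_Ioc_of_le hb0.le] at h1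
  -- bound a.e.
  have h_bound : ∀ n : ℕ, ∀ᵐ x : ℝ ∂(volume.restrict (Set.Ioc (0:ℝ) b)),
      ‖Real.exp (2 * Real.log n * γ ⌈x * n⌉₊ / (1 + γ ⌈x * n⌉₊))‖ ≤
        Real.exp (2 * D) * x ^ (-β) := by
    intro n
    rw [ae_restrict_iff' measurableSet_Ioc]
    filter_upwards with x hx
    rw [Real.norm_eq_abs, abs_of_pos (Real.exp_pos _)]
    exact h_bd n x hx
  -- limit a.e.
  have h_lim : ∀ᵐ x : ℝ ∂(volume.restrict (Set.Ioc (0:ℝ) b)),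
      Tendsto (fun n : ℕ =>
        Real.exp (2 * Real.log n * γ ⌈x * n⌉₊ / (1 + γ ⌈x * n⌉₊))) atTop (nhds 1) := by
    rw [ae_restrict_iff' measurableSet_Ioc]
    filter_upwards with x hx
    have := (Real.continuous_exp.tendsto 0).comp (hpt x hx.1)
    simpa [Function.comp_def] using this
  have key := tendsto_integral_of_dominated_convergence
    (fun x : ℝ => Real.exp (2 * D) * x ^ (-β)) hmeas hgint h_bound h_lim
  have hconst : ∫ x in Set.Ioc (0:ℝ) b, (1:ℝ) = b := by
    rw [setIntegral_const, measureReal_def, Real.volume_Ioc, smul_eq_mul, mul_one, sub_zero,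
      ENNReal.toReal_ofReal hb0.le]
  rw [hconst] at key
  exact key
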